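/- Let S : ℝ → ℝ be continuously differentiable with derivative S', fix Z ∈ ℝ, grid points x_j ∈ ℝ and positive reals n₀_j, T_j (j = 1,…,N), and particle weights w_k ∈ ℝ (k = 1,…,N_p). Suppose φ : ℝ^{N_p} → ℝ^N is differentiable and satisfies the discrete Poisson–Boltzmann constraint identically: for every X = (x_1,…,x_{N_p}) ∈ ℝ^{N_p} and every j, -Z·∑_{k=1}^{N_p} w_k·S(x_j - x_k) + (𝔸φ(X))_j + n₀_j·exp(φ_j(X)/T_j) = 0. Define the discrete Hamiltonian H(X, V) = -(Δx/2)·φ(X)ᵀ𝔸φ(X) + Z·∑_{j=1}^N Δx·∑_{k=1}^{N_p} w_k·S(x_j - x_k)·φ_j(X) + (1/2)·∑_{k=1}^{N_p} w_k·v_k² - Δx·∑_{j=1}^N T_j·n₀_j·exp(φ_j(X)/T_j). Then for every k: ∂H/∂x_k = -Z·w_k·∑_{j=1}^N Δx·S'(x_j - x_k)·φ_j(X), i.e. all terms involving derivatives of φ with respect to x_k cancel due to the constraint; consequently the weighted Hamiltonian system ẋ_k = (1/w_k)·∂H/∂v_k, v̇_k = -(1/w_k)·∂H/∂x_k coincides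 with the equations of motion ẋ_k = v_k, v̇_k = Z·∑_{j=1}^N Δx·S'(x_j - x_k)·φ_j(X). -/

import Mathlib

open Matrix BigOperators

/-- The periodic centered second-difference matrix on `Fin N`. -/
noncomputable def Amat (N : ℕ) [NeZero N] (dx : ℝ) : Matrix (Fin N) (Fin N) ℝ :=
  fun j k =>
    if k = j then -2 / dx ^ 2
    else if k = j + 1 then 1 / dx ^ 2
    else if k = j - 1 then 1 / dx ^ 2
    else 0

lemma Amat_symm (N : ℕ) [NeZero N] (dx : ℝ) (j i : Fin N) :
    Amat N dx j i = Amat N dx i j := by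
  unfold Amat
  by_cases h0 : i = j
  · subst h0; rfl
  · have h0' : ¬ j = i := fun h => h0 h.symm
    rw [if_neg h0, if_neg h0']
    by_cases h1 : i = j + 1
    · have hj : j = i - 1 := by subst h1; simp
      rw [if_pos h1]
      by_cases h2 : j = i + 1
      · rw [if_pos h2]
      · rw [if_neg h2, if_pos hj]
    · by_cases h2 : i = j - 1
      · have hj : j = i + 1 := by subst h2; simp
        rw [if_neg h1, if_pos h2, if_pos hj]
      · have h3 : ¬ j = i + 1 := fun h => h2 (by subst h; simp)
        have h4 : ¬ j = i - 1 := fun h => h1 (by subst h; simp)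
        rw [if_neg h1, if_neg h2, if_neg h3, if_neg h4]

/-- with the electrostatic potential determined from the particle positions by the
discrete Poisson–Boltzmann constraint, all terms involving derivatives of `φ` cancel in
`∂H/∂x_k`, so `∂H/∂x_k = -Z wₖ ∑ⱼ Δx S'(xⱼ - x_k) φⱼ(X)`, and the weighted Hamiltonian system
`ẋ_k = (1/wₖ)∂H/∂v_k`, `v̇_k = -(1/wₖ)∂H/∂x_k` coincides with the equations of motion
`ẋ_k = v_k`, `v̇_k = Z ∑ⱼ Δx S'(xⱼ - x_k) φⱼ(X)`. -/
theorem hamiltonian_partials_with_constraint (N : ℕ) [NeZero N] (hN : 3 ≤ N) (dx : ℝ)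
    (hdx : 0 < dx) (Np : ℕ) (Z : ℝ) (w : Fin Np → ℝ) (hw : ∀ k, w k ≠ 0)
    (S S' : ℝ → ℝ) (hS : ∀ x, HasDerivAt S (S' x) x) (hS' : Continuous S')
    (xg : Fin N → ℝ) (n0 T : Fin N → ℝ) (hn0 : ∀ j, 0 < n0 j) (hT : ∀ j, 0 < T j)
    (φ : (Fin Np → ℝ) → Fin N → ℝ) (hφ : Differentiable ℝ φ)
    (hcon : ∀ (X : Fin Np → ℝ) (j : Fin N),
      -(Z * ∑ k, w k * S (xg j - X k)) + (Amat N dx).mulVec (φ X) j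
        + n0 j * Real.exp (φ X j / T j) = 0)
    (H : (Fin Np → ℝ) → (Fin Np → ℝ) → ℝ)
    (hH : ∀ X V, H X V =
        -(dx / 2) * (φ X ⬝ᵥ (Amat N dx).mulVec (φ X))
          + Z * ∑ j, dx * ∑ k, w k * S (xg j - X k) * φ X j
          + (1 / 2) * ∑ k, w k * (V k) ^ 2
          - dx * ∑ j, T j * n0 j * Real.exp (φ X j / T j)) :
    (∀ (X V : Fin Np → ℝ) (k : Fin Np),
      HasDerivAt (fun t : ℝ => H (Function.update X k t) V)
        (-(Z * w k * ∑ j, dx * S' (xg j - X k) * φ X j)) (X k)) ∧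
    (∀ (X V : Fin Np → ℝ) (k : Fin Np),
      HasDerivAt (fun t : ℝ => H X (Function.update V k t)) (w k * V k) (V k)) ∧
    (∀ (X V : Fin Np → ℝ) (k : Fin Np),
      (1 / w k) * deriv (fun t : ℝ => H X (Function.update V k t)) (V k) = V k ∧
      -(1 / w k) * deriv (fun t : ℝ => H (Function.update X k t) V) (X k)
        = Z * ∑ j, dx * S' (xg j - X k) * φ X j) := by
  -- symmetric bilinear identity
  have hsymAll : ∀ (u v : Fin N → ℝ),
      ∑ j, u j * (∑ i, Amat N dx j i * v i) = ∑ j, v j * (∑ i, Amat N dx j i * u i) := by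
    intro u v
    simp only [Finset.mul_sum]
    rw [Finset.sum_comm]
    refine Finset.sum_congr rfl fun a _ => Finset.sum_congr rfl fun b _ => ?_
    rw [Amat_symm N dx b a]
    ring
  have hX : ∀ (X V : Fin Np → ℝ) (k : Fin Np),
      HasDerivAt (fun t : ℝ => H (Function.update X k t) V)
        (-(Z * w k * ∑ j, dx * S' (xg j - X k) * φ X j)) (X k) := by
    intro X V k
    have hupd : Function.update X k (X k) = X := Function.update_eq_self k X
    -- differentiability of t ↦ φ(update X k t) j
    have hdiffupd : Differentiable ℝ (fun t : ℝ => Function.update X k t) := by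
      rw [show (fun t : ℝ => Function.update X k t) = fun t l => if l = k then t else X l from
        funext fun t => funext fun l => Function.update_apply X k t l]
      refine differentiable_pi.mpr fun l => ?_
      by_cases h : l = k
      · simp only [h, if_pos rfl]; exact differentiable_id
      · simp only [if_neg h]; exact differentiable_const _
    have hc : Differentiable ℝ (fun t : ℝ => φ (Function.update X k t)) := hφ.comp hdiffupd
    set d : Fin N → ℝ := fun j => deriv (fun t : ℝ => φ (Function.update X k t) j) (X k) with hdd
    have hd : ∀ j, HasDerivAt (fun t : ℝ => φ (Function.update X k t) j) (d j) (X k) :=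
      fun j => ((differentiable_pi.mp hc j) (X k)).hasDerivAt
    -- term 1
    have h1 : HasDerivAt
        (fun t => -(dx / 2) *
          (φ (Function.update X k t) ⬝ᵥ (Amat N dx).mulVec (φ (Function.update X k t))))
        (-(dx / 2) * ∑ j, (d j * (∑ i, Amat N dx j i * φ X i)
            + φ X j * (∑ i, Amat N dx j i * d i))) (X k) := by
      refine HasDerivAt.const_mul _ ?_
      simp only [dotProduct, Matrix.mulVec]
      refine HasDerivAt.fun_sum fun j _ => ?_
      have hm := (hd j).mul
        (HasDerivAt.fun_sum fun i (_ : i ∈ Finset.univ) => (hd i).const_mul (Amat N dx j i))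
      rw [hupd] at hm
      exact hm
    -- term 2
    have hrowS : ∀ j, HasDerivAt (fun t => ∑ l, w l * S (xg j - Function.update X k t l))
        (-(w k * S' (xg j - X k))) (X k) := by
      intro j
      have hterm : ∀ l : Fin Np, HasDerivAt (fun t => w l * S (xg j - Function.update X k t l))
          (if l = k then -(w k * S' (xg j - X k)) else 0) (X k) := by
        intro l
        by_cases hl : l = k
        · subst hl
          rw [if_pos rfl]
          simp only [Function.update_self]
          have ha : HasDerivAt (fun t : ℝ => xg j - t) (-1) (X l) :=
            (hasDerivAt_id (X l)).const_sub (xg j)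
          have hb := ((hS (xg j - X l)).comp (X l) ha).const_mul (w l)
          refine hb.congr_deriv ?_
          ring
        · rw [if_neg hl]
          simp only [Function.update_of_ne hl]
          exact hasDerivAt_const _ _
      have hsum := HasDerivAt.fun_sum (fun l (_ : l ∈ Finset.univ) => hterm l)
      refine hsum.congr_deriv ?_
      simp
    have h2 : HasDerivAt
        (fun t => Z * ∑ j, dx * ∑ l, w l * S (xg j - Function.update X k t l)
            * φ (Function.update X k t) j)
        (Z * ∑ j, dx * (-(w k * S' (xg j - X k)) * φ X j
            + (∑ l, w l * S (xg j - X l)) * d j)) (X k) := by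
      refine HasDerivAt.const_mul Z (HasDerivAt.fun_sum fun j _ => ?_)
      refine HasDerivAt.const_mul dx ?_
      simp only [← Finset.sum_mul]
      have hm := (hrowS j).mul (hd j)
      rw [hupd] at hm
      exact hm
    -- term 3 constant
    have h3 : HasDerivAt (fun _ : ℝ => (1 / 2 : ℝ) * ∑ l, w l * (V l) ^ 2) 0 (X k) :=
      hasDerivAt_const _ _
    -- term 4
    have h4 : HasDerivAt
        (fun t => dx * ∑ j, T j * n0 j * Real.exp (φ (Function.update X k t) j / T j))
        (dx * ∑ j, T j * n0 j * (Real.exp (φ X j / T j) * (d j / T j))) (X k) := by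
      refine HasDerivAt.const_mul dx (HasDerivAt.fun_sum fun j _ => ?_)
      have h := (((hd j).div_const (T j)).exp).const_mul (T j * n0 j)
      rw [hupd] at h
      exact h
    have hbig := ((h1.fun_add h2).fun_add h3).fun_sub h4
    -- identify derivative values
    have key : ∀ j, Z * (∑ l, w l * S (xg j - X l)) - (∑ i, Amat N dx j i * φ X i)
        - n0 j * Real.exp (φ X j / T j) = 0 := by
      intro j
      have h := hcon X j
      simp only [Matrix.mulVec, dotProduct] at h
      linarith
    have heq : -(Z * w k * ∑ j, dx * S' (xg j - X k) * φ X j)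
        = -(dx / 2) * ∑ j, (d j * (∑ i, Amat N dx j i * φ X i)
            + φ X j * (∑ i, Amat N dx j i * d i))
          + Z * ∑ j, dx * (-(w k * S' (xg j - X k)) * φ X j
            + (∑ l, w l * S (xg j - X l)) * d j)
          + 0
          - dx * ∑ j, T j * n0 j * (Real.exp (φ X j / T j) * (d j / T j)) := by
      rw [add_zero]
      rw [Finset.sum_add_distrib, hsymAll (φ X) d, ← Finset.sum_add_distrib]
      rw [show (∑ j, T j * n0 j * (Real.exp (φ X j / T j) * (d j / T j)))
          = ∑ j, n0 j * Real.exp (φ X j / T j) * d j from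
        Finset.sum_congr rfl fun j _ => by
          have hTj := (hT j).ne'
          field_simp]
      rw [Finset.mul_sum, ← Finset.sum_neg_distrib, Finset.mul_sum, Finset.mul_sum,
        Finset.mul_sum, ← Finset.sum_add_distrib, ← Finset.sum_sub_distrib]
      refine Finset.sum_congr rfl fun j _ => ?_
      have hk := key j
      linear_combination (-(dx * d j)) * hk
    rw [heq]
    simpa only [hH] using hbig
  have hV : ∀ (X V : Fin Np → ℝ) (k : Fin Np),
      HasDerivAt (fun t : ℝ => H X (Function.update V k t)) (w k * V k) (V k) := by
    intro X V k
    have hterm : ∀ l : Fin Np, HasDerivAt (fun t => w l * (Function.update V k t l) ^ 2)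
        (if l = k then w k * (2 * V k) else 0) (V k) := by
      intro l
      by_cases hl : l = k
      · subst hl
        rw [if_pos rfl]
        simp only [Function.update_self]
        have := (hasDerivAt_pow 2 (V l)).const_mul (w l)
        refine this.congr_deriv ?_
        norm_num
      · rw [if_neg hl]
        simp only [Function.update_of_ne hl]
        exact hasDerivAt_const _ _
    have hsum : HasDerivAt (fun t => (1 / 2 : ℝ) * ∑ l, w l * (Function.update V k t l) ^ 2)
        (w k * V k) (V k) := by
      have h := (HasDerivAt.fun_sum (fun l (_ : l ∈ Finset.univ) => hterm l)).const_mul (1 / 2 : ℝ)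
      refine h.congr_deriv ?_
      simp
      ring
    have hbig := (((hasDerivAt_const (V k)
          (-(dx / 2) * (φ X ⬝ᵥ (Amat N dx).mulVec (φ X)))).fun_add
        (hasDerivAt_const (V k)
          (Z * ∑ j, dx * ∑ l, w l * S (xg j - X l) * φ X j))).fun_add hsum).fun_sub
      (hasDerivAt_const (V k) (dx * ∑ j, T j * n0 j * Real.exp (φ X j / T j)))
    have : w k * V k = 0 + 0 + w k * V k - 0 := by ring
    rw [this]
    simpa only [hH] using hbig
  refine ⟨hX, hV, fun X V k => ⟨?_, ?_⟩⟩
  · rw [(hV X V k).deriv]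
    field_simp [hw k]
  · rw [(hX X V k).deriv]
    field_simp [hw k]
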